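/- Jacobi triple product (second form): ∑_{j=-∞}^∞ z^j q^{j^2} = ∏_{n=1}^∞ (1 - q^{2n})(1 + z q^{2n-1})(1 + z^{-1} q^{2n-1}), as formal Laurent series in z over ℤ[[q]]. -/

import Mathlib

open PowerSeries Finset

noncomputable section JTP

/-- `q` -/
abbrev jq : PowerSeries ℤ := PowerSeries.X

/-- coefficient of `z^j` in `∏_{m=1}^B (1+z q^{2m-1})(1+z⁻¹ q^{2m-1})` -/
def jA : ℕ → ℤ → PowerSeries ℤ
  | 0, j => if j = 0 then 1 else 0
  | (B+1), j => jA B j * (1 + jq^(2*B+1) * jq^(2*B+1))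
      + jq^(2*B+1) * (jA B (j-1) + jA B (j+1))

def jV (k : ℕ) : PowerSeries ℤ := ∏ i ∈ Icc 1 k, (1 - jq^(2*i))

def jP (B j : ℕ) : PowerSeries ℤ := ∏ i ∈ range (B-j), (1 - jq^(2*(B+j+1+i)))

lemma jA_symm : ∀ B : ℕ, ∀ j : ℤ, jA B (-j) = jA B j := by
  intro B
  induction B with
  | zero => intro j; simp [jA, neg_eq_zero]
  | succ B ih =>
      intro j
      show jA B (-j) * _ + _ * (jA B (-j-1) + jA B (-j+1)) = _
      rw [ih j, show -j-1 = -(j+1) by ring, show -j+1 = -(j-1) by ring, ih (j+1), ih (j-1)]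
      show _ = jA B j * _ + _ * (jA B (j-1) + jA B (j+1))
      ring

lemma jA_eq_zero : ∀ B : ℕ, ∀ j : ℤ, (B:ℤ) < j → jA B j = 0 := by
  intro B
  induction B with
  | zero => intro j hj; simp [jA, show j ≠ 0 by omega]
  | succ B ih =>
      intro j hj
      show jA B j * _ + _ * (jA B (j-1) + jA B (j+1)) = 0
      rw [ih j (by push_cast at hj ⊢; omega), ih (j-1) (by push_cast at hj ⊢; omega),
        ih (j+1) (by push_cast at hj ⊢; omega)]
      ring

lemma jV_zero : jV 0 = 1 := by simp [jV]

lemma jV_succ (k : ℕ) : jV (k+1) = jV k * (1 - jq^(2*(k+1))) := by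
  rw [jV, jV, Finset.prod_Icc_succ_top (by omega)]

lemma jP_self (B : ℕ) : jP B B = 1 := by simp [jP]



lemma jP_bot (B j : ℕ) (h : j < B) :
    jP B j = (1 - jq^(2*(B+j+1))) * jP B (j+1) := by
  have h1 : B - j = (B - (j+1)) + 1 := by omega
  rw [jP, h1, Finset.prod_range_succ']
  rw [jP, mul_comm]
  congr 1
  apply Finset.prod_congr rfl
  intro i _
  congr 2
  omega

lemma jP_succB (B j : ℕ) (h : j < B) :
    jP (B+1) j = jP B (j+1) * ((1 - jq^(2*(2*B+1))) * (1 - jq^(2*(2*B+2)))) := by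
  have h1 : B + 1 - j = (B - (j+1)) + 1 + 1 := by omega
  rw [jP, h1, Finset.prod_range_succ, Finset.prod_range_succ, jP]
  have e1 : 2*(B+1+j+1+(B-(j+1))) = 2*(2*B+1) := by omega
  have e2 : 2*(B+1+j+1+(B-(j+1)+1)) = 2*(2*B+2) := by omega
  rw [e1, e2, mul_assoc]
  congr 1
  apply Finset.prod_congr rfl
  intro i _
  congr 2
  omega

lemma jA_formula : ∀ B : ℕ, ∀ j : ℕ, j ≤ B →
    jA B (j:ℤ) * jV (B-j) = jq^(j*j) * jP B j := by
  intro B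
  induction B with
  | zero =>
      intro j hj
      interval_cases j
      simp [jA, jV, jP]
  | succ B ih =>
      intro j hj
      rcases Nat.lt_or_ge j (B+1) with hlt | hge
      · -- j ≤ B
        have hjB : j ≤ B := by omega
        rcases Nat.lt_or_ge j B with hjlt | hjge
        · -- j < B : main case, B = j + K + 1
          obtain ⟨K, rfl⟩ : ∃ K, B = j + K + 1 := ⟨B - j - 1, by omega⟩
          have hy := ih j (by omega)
          have hz := ih (j+1) (by omega)
          have hvy : j + K + 1 - j = K + 1 := by omega
          have hvz : j + K + 1 - (j+1) = K := by omega
          have hvg : j + K + 1 + 1 - j = K + 2 := by omega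
          rw [hvy] at hy
          rw [hvz] at hz
          push_cast at hz
          have hPy : jP (j+K+1) j = (1 - jq^(2*((j+K+1)+j+1))) * jP (j+K+1) (j+1) :=
            jP_bot _ _ (by omega)
          rw [hPy] at hy
          have hPg : jP ((j+K+1)+1) j
              = jP (j+K+1) (j+1) * ((1 - jq^(2*(2*(j+K+1)+1))) * (1 - jq^(2*(2*(j+K+1)+2)))) :=
            jP_succB _ _ (by omega)
          show (jA (j+K+1) j * (1 + jq^(2*(j+K+1)+1) * jq^(2*(j+K+1)+1))
              + jq^(2*(j+K+1)+1) * (jA (j+K+1) ((j:ℤ)-1) + jA (j+K+1) ((j:ℤ)+1)))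
              * jV ((j+K+1)+1-j) = jq^(j*j) * jP ((j+K+1)+1) j
          rw [hvg, hPg, show (K+2) = (K+1)+1 by rfl, jV_succ, jV_succ]
          rcases Nat.eq_zero_or_pos j with rfl | hj1
          · -- j = 0
            rw [show ((0:ℕ):ℤ) - 1 = -(1:ℤ) by norm_num, jA_symm _ 1]
            rw [jV_succ] at hy
            push_cast at hy hz ⊢
            linear_combination ((1 : PowerSeries ℤ) + jq^(2*(0+K+1)+1) * jq^(2*(0+K+1)+1))
                * (1 - jq^(2*(K+1+1))) * hy
              + 2 * jq^(2*(0+K+1)+1) * (1 - jq^(2*(K+1))) * (1 - jq^(2*(K+1+1))) * hz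
          · -- j ≥ 1
            obtain ⟨J, rfl⟩ : ∃ J, j = J + 1 := ⟨j - 1, by omega⟩
            have hx := ih J (by omega)
            have hvx : J + 1 + K + 1 - J = K + 2 := by omega
            rw [hvx, show (K+2) = (K+1)+1 by rfl, jV_succ, jV_succ] at hx
            have hPx : jP (J+1+K+1) J = (1 - jq^(2*((J+1+K+1)+J+1))) *
                ((1 - jq^(2*((J+1+K+1)+(J+1)+1))) * jP (J+1+K+1) (J+1+1)) := by
              rw [jP_bot _ _ (by omega), jP_bot _ _ (by omega)]
            rw [hPx] at hx
            rw [show ((J+1:ℕ):ℤ) - 1 = (J:ℤ) by push_cast; ring]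
            rw [jV_succ] at hy
            push_cast at hy hz hx ⊢
            linear_combination ((1 : PowerSeries ℤ) + jq^(2*(J+1+K+1)+1) * jq^(2*(J+1+K+1)+1))
                * (1 - jq^(2*(K+1+1))) * hy
              + jq^(2*(J+1+K+1)+1) * hx
              + jq^(2*(J+1+K+1)+1) * (1 - jq^(2*(K+1))) * (1 - jq^(2*(K+1+1))) * hz
        · -- j = B
          have hjeq : j = B := by omega
          subst hjeq
          have hy := ih j (by omega)
          rw [Nat.sub_self, jV_zero, jP_self, mul_one, mul_one] at hy
          show (jA j j * (1 + jq^(2*j+1) * jq^(2*j+1))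
              + jq^(2*j+1) * (jA j ((j:ℤ)-1) + jA j ((j:ℤ)+1))) * jV (j+1-j)
              = jq^(j*j) * jP (j+1) j
          have hz : jA j ((j:ℤ)+1) = 0 := jA_eq_zero j _ (by omega)
          have hVg : j + 1 - j = 1 := by omega
          rw [hVg, show (1:ℕ) = 0 + 1 by rfl, jV_succ, jV_zero, one_mul, hy, hz]
          have hPg : jP (j+1) j = 1 - jq^(2*(2*j+2)) := by
            rw [jP, show j+1-j = 1 by omega, Finset.prod_range_one]
            congr 2
            omega
          rw [hPg]
          rcases Nat.eq_zero_or_pos j with rfl | hj1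
          · rw [show ((0:ℕ):ℤ) - 1 = -(1:ℤ) by norm_num, jA_symm _ 1,
              jA_eq_zero 0 1 (by omega)]
            ring
          · obtain ⟨J, rfl⟩ : ∃ J, j = J + 1 := ⟨j - 1, by omega⟩
            have hx := ih J (by omega)
            have hvx : J + 1 - J = 1 := by omega
            rw [hvx, show (1:ℕ) = 0 + 1 by rfl, jV_succ, jV_zero, one_mul] at hx
            have hPx : jP (J+1) J = 1 - jq^(2*(2*J+2)) := by
              rw [jP, show J+1-J = 1 by omega, Finset.prod_range_one]
              congr 2
              omega
            rw [hPx] at hx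
            rw [show ((J+1:ℕ):ℤ) - 1 = (J:ℤ) by push_cast; ring]
            push_cast at hx ⊢
            linear_combination jq^(2*(J+1)+1) * hx
      · -- j = B + 1
        have hjeq : j = B + 1 := by omega
        subst hjeq
        show (jA B (((B:ℕ)+1:ℕ):ℤ) * (1 + jq^(2*B+1) * jq^(2*B+1))
            + jq^(2*B+1) * (jA B ((((B:ℕ)+1:ℕ):ℤ)-1) + jA B ((((B:ℕ)+1:ℕ):ℤ)+1))) * jV (B+1-(B+1))
            = jq^((B+1)*(B+1)) * jP (B+1) (B+1)
        have h1 : jA B (((B+1:ℕ)):ℤ) = 0 := jA_eq_zero B _ (by push_cast; omega)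
        have h2 : jA B ((((B+1:ℕ)):ℤ)+1) = 0 := jA_eq_zero B _ (by push_cast; omega)
        have h3 : (((B+1:ℕ)):ℤ) - 1 = (B:ℤ) := by push_cast; ring
        have hy := ih B (by omega)
        rw [Nat.sub_self, jV_zero, jP_self, mul_one, mul_one] at hy
        rw [h1, h2, h3, hy, Nat.sub_self, jV_zero, jP_self, mul_one, mul_one]
        rw [← pow_add]
        congr 1
        ring

lemma coeff_hahn_prod (B : ℕ) (j : ℤ) :
    (∏ m ∈ Icc 1 B,
      ((1 + HahnSeries.single (1:ℤ) (jq^(2*m-1))) *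
       (1 + HahnSeries.single (-1:ℤ) (jq^(2*m-1))))).coeff j = jA B j := by
  induction B generalizing j with
  | zero => simp [jA, HahnSeries.coeff_one]
  | succ B ih =>
      rw [Finset.prod_Icc_succ_top (by omega)]
      have hr : 2 * (B+1) - 1 = 2*B+1 := by omega
      rw [hr]
      set r : PowerSeries ℤ := jq^(2*B+1) with hrdef
      set H := ∏ m ∈ Icc 1 B,
        ((1 + HahnSeries.single (1:ℤ) (jq^(2*m-1))) *
         (1 + HahnSeries.single (-1:ℤ) (jq^(2*m-1)))) with hH
      have hexp : (1 + HahnSeries.single (1:ℤ) r) * (1 + HahnSeries.single (-1:ℤ) r)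
          = 1 + HahnSeries.single (1:ℤ) r + HahnSeries.single (-1:ℤ) r
            + HahnSeries.single (0:ℤ) (r*r) := by
        rw [mul_add, mul_one, add_mul, one_mul, HahnSeries.single_mul_single]
        norm_num
        abel
      rw [hexp]
      have h1 : (H * HahnSeries.single (1:ℤ) r).coeff j = H.coeff (j-1) * r := by
        have := HahnSeries.coeff_mul_single_add (r := r) (x := H) (a := j-1) (b := 1)
        rwa [sub_add_cancel] at this
      have h2 : (H * HahnSeries.single (-1:ℤ) r).coeff j = H.coeff (j+1) * r := by
        have := HahnSeries.coeff_mul_single_add (r := r) (x := H) (a := j+1) (b := -1)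
        rwa [add_neg_cancel_right] at this
      rw [mul_add, mul_add, mul_add, mul_one, HahnSeries.coeff_add, HahnSeries.coeff_add,
        HahnSeries.coeff_add, h1, h2, HahnSeries.coeff_mul_single_zero, ih, ih, ih]
      show _ = jA B j * (1 + r * r) + r * (jA B (j-1) + jA B (j+1))
      ring

lemma coeff_full_prod (B : ℕ) (j : ℤ) :
    ((∏ m ∈ Icc 1 B,
        (HahnSeries.C (1 - (PowerSeries.X : PowerSeries ℤ) ^ (2 * m)) *
         (1 + HahnSeries.single (1 : ℤ) ((PowerSeries.X : PowerSeries ℤ) ^ (2 * m - 1))) *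
         (1 + HahnSeries.single (-1 : ℤ) ((PowerSeries.X : PowerSeries ℤ) ^ (2 * m - 1))))).coeff j)
    = jV B * jA B j := by
  have hsplit : (∏ m ∈ Icc 1 B,
      (HahnSeries.C (1 - (PowerSeries.X : PowerSeries ℤ) ^ (2 * m)) *
       (1 + HahnSeries.single (1 : ℤ) ((PowerSeries.X : PowerSeries ℤ) ^ (2 * m - 1))) *
       (1 + HahnSeries.single (-1 : ℤ) ((PowerSeries.X : PowerSeries ℤ) ^ (2 * m - 1)))))
      = HahnSeries.C (jV B) *
        ∏ m ∈ Icc 1 B,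
          ((1 + HahnSeries.single (1:ℤ) (jq^(2*m-1))) *
           (1 + HahnSeries.single (-1:ℤ) (jq^(2*m-1)))) := by
    rw [jV, map_prod, ← Finset.prod_mul_distrib]
    apply Finset.prod_congr rfl
    intro m _
    rw [mul_assoc]
  rw [hsplit, HahnSeries.C_apply, HahnSeries.coeff_single_zero_mul, coeff_hahn_prod]

lemma one_add_shift_prod (D : ℕ) (s : Finset ℕ) (f : ℕ → ℕ) (hf : ∀ i ∈ s, D < f i) :
    ∃ E : PowerSeries ℤ, (∏ i ∈ s, (1 - jq^(f i))) = 1 + jq^(D+1) * E := by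
  classical
  induction s using Finset.induction_on with
  | empty => exact ⟨0, by simp⟩
  | @insert a s' hnot ih =>
      obtain ⟨E, hE⟩ := ih (fun i hi => hf i (Finset.mem_insert_of_mem hi))
      have ha : D < f a := hf a (Finset.mem_insert_self a s')
      refine ⟨-jq^(f a - (D+1)) * (1 + jq^(D+1) * E) + E, ?_⟩
      rw [Finset.prod_insert hnot, hE]
      have : jq^(f a) = jq^(D+1) * jq^(f a - (D+1)) := by
        rw [← pow_add]; congr 1; omega
      rw [this]; ring

theorem jacobi_triple_product_second_form' (j : ℤ) (D : ℕ) :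
    ∃ B0 : ℕ, ∀ B ≥ B0,
      PowerSeries.coeff (R := ℤ) D ((PowerSeries.X : PowerSeries ℤ) ^ (j * j).toNat)
      = PowerSeries.coeff (R := ℤ) D
          ((∏ m ∈ Finset.Icc 1 B,
              (HahnSeries.C (1 - (PowerSeries.X : PowerSeries ℤ) ^ (2 * m)) *
               (1 + HahnSeries.single (1 : ℤ) ((PowerSeries.X : PowerSeries ℤ) ^ (2 * m - 1))) *
               (1 + HahnSeries.single (-1 : ℤ) ((PowerSeries.X : PowerSeries ℤ) ^ (2 * m - 1))))).coeff j) := by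
  refine ⟨D + j.natAbs + 1, fun B hB => ?_⟩
  set n := j.natAbs with hn
  rw [coeff_full_prod]
  have hjn : jA B j = jA B ((n:ℕ):ℤ) := by
    rcases Int.natAbs_eq j with h | h
    · rw [← hn] at h; rw [h]
    · rw [← hn] at h; rw [h, jA_symm]
  have hn_le : n ≤ B := by omega
  have hIcc : ∀ k : ℕ, Icc 1 k = Ioc 0 k := fun k => Finset.ext (fun x => by simp; omega)
  have hVsplit : jV B = jV (B - n) * ∏ i ∈ Ioc (B-n) B, (1 - jq^(2*i)) := by
    rw [jV, jV, hIcc, hIcc, Finset.prod_Ioc_consecutive _ (Nat.zero_le _) (by omega)]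
  have hform := jA_formula B n hn_le
  rw [hjn, hVsplit]
  have hre : jV (B - n) * (∏ i ∈ Ioc (B-n) B, (1 - jq^(2*i))) * jA B ((n:ℕ):ℤ)
      = jq^(n*n) * (jP B n * ∏ i ∈ Ioc (B-n) B, (1 - jq^(2*i))) := by
    calc jV (B - n) * (∏ i ∈ Ioc (B-n) B, (1 - jq^(2*i))) * jA B ((n:ℕ):ℤ)
        = (jA B ((n:ℕ):ℤ) * jV (B-n)) * ∏ i ∈ Ioc (B-n) B, (1 - jq^(2*i)) := by ring
      _ = _ := by rw [hform]; ring
  rw [hre]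
  obtain ⟨E, hE⟩ : ∃ E, jP B n * (∏ i ∈ Ioc (B-n) B, (1 - jq^(2*i)))
      = 1 + jq^(D+1) * E := by
    obtain ⟨E1, h1⟩ := one_add_shift_prod D (Ioc (B-n) B) (fun i => 2*i)
      (fun i hi => by simp only [Finset.mem_Ioc] at hi; omega)
    obtain ⟨E2, h2⟩ := one_add_shift_prod D (range (B-n)) (fun i => 2*(B+n+1+i))
      (fun i _ => by omega)
    refine ⟨E2 + E1 + jq^(D+1) * (E2 * E1), ?_⟩
    rw [jP, h2, h1]
    ring
  rw [hE]
  have htoNat : (j*j).toNat = n*n := by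
    rw [← Int.natAbs_mul_self, ← hn, Int.toNat_natCast]
  rw [htoNat, mul_add, mul_one, map_add]
  have hzero : (PowerSeries.coeff (R := ℤ) D) (jq^(n*n) * (jq^(D+1) * E)) = 0 := by
    have hdvd : (PowerSeries.X : PowerSeries ℤ)^(D+1) ∣ jq^(n*n) * (jq^(D+1)*E) :=
      ⟨jq^(n*n) * E, by ring⟩
    exact PowerSeries.X_pow_dvd_iff.mp hdvd D (by omega)
  rw [hzero, add_zero]

end JTP

/-- Jacobi triple product, second form:
`∑_{j∈ℤ} z^j q^{j²} = ∏_{n≥1} (1-q^{2n})(1+zq^{2n-1})(1+z⁻¹q^{2n-1})`,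
as formal Laurent series in `z` over `ℤ[[q]]`, expressed coefficient-wise in `z` (via
Hahn series in `z`) and in `q` (via truncations of the infinite product). -/
theorem jacobi_triple_product_second_form (j : ℤ) (D : ℕ) :
    ∃ B0 : ℕ, ∀ B ≥ B0,
      PowerSeries.coeff (R := ℤ) D ((PowerSeries.X : PowerSeries ℤ) ^ (j * j).toNat)
      = PowerSeries.coeff (R := ℤ) D
          ((∏ m ∈ Finset.Icc 1 B,
              (HahnSeries.C (1 - (PowerSeries.X : PowerSeries ℤ) ^ (2 * m)) *
               (1 + HahnSeries.single (1 : ℤ) ((PowerSeries.X : PowerSeries ℤ) ^ (2 * m - 1))) *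
               (1 + HahnSeries.single (-1 : ℤ) ((PowerSeries.X : PowerSeries ℤ) ^ (2 * m - 1))))).coeff j) :=
  jacobi_triple_product_second_form' j D
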